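/- Let A be a bicomplete abelian category. A map p : E \to B in Ch_{\geq 0}(A) is a fibration in the Hurewicz model structure (i.e. a degreewise split epimorphism in all positive degrees) if and only if it satisfies the homotopy lifting property: for every complex X, every map f : X \to E, and every chain homotopy H : X \otimes I \to B with H \circ i_0 = p \circ f, there exists a chain homotopy \tilde{H} : X \otimes I \to E with \tilde{H} \circ i_0 = f and p \circ \tilde{H} = H. -/

import Mathlib

open CategoryTheory CategoryTheory.Limits

universe v u

section Aux

variable {𝒜 : Type u} [Category.{v} 𝒜] [Abelian 𝒜]

/-- The "disk" complex on `B.X (m+1)`: the object `B.X (m+1)` in every degree,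
with the only nonzero differential being the identity from degree `m+1` to `m`. -/
def diskComplex (B : ChainComplex 𝒜 ℕ) (m : ℕ) : ChainComplex 𝒜 ℕ where
  X _ := B.X (m + 1)
  d i j := if i = m + 1 ∧ j = m then 𝟙 (B.X (m + 1)) else 0
  shape i j h := by
    rw [if_neg]
    rintro ⟨rfl, rfl⟩
    exact h rfl
  d_comp_d' i j k _ _ := by
    by_cases h2 : j = m + 1 ∧ k = m
    · rw [if_neg (show ¬(i = m + 1 ∧ j = m) by rintro ⟨-, rfl⟩; omega), zero_comp]
    · rw [if_neg h2, comp_zero]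

/-- The canonical map from the disk complex to `B`. -/
def diskMap (B : ChainComplex 𝒜 ℕ) (m : ℕ) : diskComplex B m ⟶ B where
  f k :=
    if h : k = m + 1 then -eqToHom (show _ = _ by subst h; rfl) else
      if h' : k = m then -(B.d (m + 1) m ≫ eqToHom (show B.X m = _ by subst h'; rfl)) else 0
  comm' i j hij := by
    have hij' : j + 1 = i := hij
    by_cases h1 : i = m + 1
    · subst h1
      have hj : j = m := by omega
      simp [diskComplex, ← hj, show j ≠ j + 1 by omega]
      erw [Preadditive.neg_comp, Category.id_comp]
    · by_cases h2 : i = m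
      · simp [diskComplex, h1, ← h2, show i ≠ i + 1 by omega]
      · simp [diskComplex, h1, h2]
        exact Limits.zero_comp

/-- A homotopy witnessing that `diskMap` is null-homotopic (up to `p`). -/
def diskHomotopy {E B : ChainComplex 𝒜 ℕ} (p : E ⟶ B) (m : ℕ) :
    Homotopy ((0 : diskComplex B m ⟶ E) ≫ p) (diskMap B m) where
  hom j k := if h : j = m ∧ k = m + 1 then eqToHom (show (diskComplex B m).X j = B.X k by rw [h.2]; rfl) else 0
  zero j k hr := by
    rw [dif_neg]
    rintro ⟨rfl, rfl⟩
    exact hr rfl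
  comm i := by
    rw [dNext_nat, prevD_eq _ (show (ComplexShape.down ℕ).Rel (i + 1) i from rfl)]
    rw [Limits.zero_comp, HomologicalComplex.zero_f_apply]
    by_cases h1 : i = m + 1
    · subst h1
      simp [HomologicalComplex.comp_f, diskComplex, diskMap, show ¬(m + 1 = m) by omega,
        show ¬(m + 2 = m + 1) by omega, show (m : ℕ) ≠ m + 1 by omega]
      erw [Limits.zero_comp, add_zero, eqToHom_refl, add_neg_cancel]
      rfl
    · by_cases h2 : i = m
      · subst h2
        simp [HomologicalComplex.comp_f, diskComplex, diskMap]
        erw [Limits.zero_comp, zero_add, add_neg_cancel]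
        rfl
      · simp [HomologicalComplex.comp_f, diskComplex, diskMap, h1, h2]
        erw [Limits.zero_comp, Limits.zero_comp, add_zero, add_zero]
        rfl

end Aux

theorem hurewicz_fibration_iff_homotopy_lifting_property
    {𝒜 : Type u} [Category.{v} 𝒜] [Abelian 𝒜] [HasLimits 𝒜] [HasColimits 𝒜]
    {E B : ChainComplex 𝒜 ℕ} (p : E ⟶ B) :
    (∀ n : ℕ, 0 < n → ∃ s : B.X n ⟶ E.X n, s ≫ p.f n = 𝟙 (B.X n)) ↔
      (∀ (X : ChainComplex 𝒜 ℕ) (f : X ⟶ E) (g : X ⟶ B)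
        (H : Homotopy (f ≫ p) g),
        ∃ (f' : X ⟶ E) (H' : Homotopy f f'),
          f' ≫ p = g ∧
          ∀ j k : ℕ, H'.hom j k ≫ p.f k = H.hom j k) := by
  constructor
  · intro hs X f g H
    set s : ∀ n, B.X n ⟶ E.X n := fun n =>
      if h : 0 < n then (hs n h).choose else 0 with hs_def
    have hsp : ∀ n, 0 < n → s n ≫ p.f n = 𝟙 (B.X n) := by
      intro n hn
      simp only [hs_def, dif_pos hn]
      exact (hs n hn).choose_spec
    set h' : ∀ j k, X.X j ⟶ E.X k := fun j k => H.hom j k ≫ s k with h'_def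
    have hcomp : ∀ j k, h' j k ≫ p.f k = H.hom j k := by
      intro j k
      cases k with
      | zero =>
          have hz : H.hom j 0 = 0 := H.zero j 0 (by simp [ComplexShape.down])
          simp [h'_def, hz]
      | succ k =>
          rw [h'_def]
          simp only [Category.assoc, hsp (k + 1) (Nat.succ_pos k), Category.comp_id]
    refine ⟨f - Homotopy.nullHomotopicMap h', ⟨h', ?_, ?_⟩, ?_, hcomp⟩
    · intro i j hij
      simp [h'_def, H.zero i j hij]
    · intro i
      simp [Homotopy.nullHomotopicMap]
    · rw [Preadditive.sub_comp, Homotopy.nullHomotopicMap_comp]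
      have e1 : (Homotopy.nullHomotopicMap fun i j => h' i j ≫ p.f j) =
          Homotopy.nullHomotopicMap H.hom := by
        congr 1
        funext i j
        exact hcomp i j
      rw [e1]
      ext i
      have := H.comm i
      simp only [Homotopy.nullHomotopicMap, HomologicalComplex.sub_f_apply] at *
      rw [this]
      abel
  · intro hlp n hn
    obtain ⟨m, rfl⟩ : ∃ m, n = m + 1 := ⟨n - 1, (Nat.succ_pred_eq_of_pos hn).symm⟩
    obtain ⟨f', H', hfp, hh⟩ := hlp (diskComplex B m) 0 (diskMap B m) (diskHomotopy p m)
    refine ⟨H'.hom m (m + 1), ?_⟩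
    refine (hh m (m + 1)).trans ?_
    simp only [diskHomotopy]
    rw [dif_pos (by simp)]
    rfl
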